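/- Let m ≥ 1 be an integer, q₀ = 2^m, q = 2q₀², and g = q₀(q−1). Let ℓ be a natural number with 1 ≤ ℓ ≤ q²−1. Then the number of tuples (a, b, c, d, r) of natural numbers satisfying 0 ≤ a ≤ q−1, 0 ≤ b ≤ 1, 0 ≤ c ≤ q₀−1, 0 ≤ d ≤ q₀−1, 0 ≤ r ≤ ℓ, and aq + b(q+q₀) + c(q+2q₀) + d(q+2q₀+1) ≤ rq² + ℓ equals ℓ(q²+1) − g + 1. -/

import Mathlib

namespace Suz

def Nv (s q : ℕ) (t : ℕ × ℕ × ℕ × ℕ) : ℕ :=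
  t.1 * q + t.2.1 * (q + s) + t.2.2.1 * (q + 2*s) + t.2.2.2 * (q + 2*s + 1)

def uu (s n : ℕ) : ℕ := n / s - (n % s) * (2*s+2)
def ee (s n : ℕ) : ℕ := uu s n % (2*s)
def jj (s n : ℕ) : ℕ := uu s n / (2*s)

def Rp (s q n : ℕ) : Prop :=
  (n % s) * (2*s+2) ≤ n / s ∧
  ee s n % 2 + ee s n / 2 ≤ jj s n ∧
  jj s n ≤ q - 1 + (ee s n % 2 + ee s n / 2)

instance Rp.dec : ∀ s q, DecidablePred (Rp s q) := fun s q n => by unfold Rp; infer_instance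

lemma dm_mod {m : ℕ} (k r : ℕ) (h : r < m) : (m*k + r) % m = r := by
  rw [Nat.mul_add_mod]; exact Nat.mod_eq_of_lt h

lemma dm_div {m : ℕ} (k r : ℕ) (h : r < m) : (m*k + r) / m = k := by
  rw [Nat.mul_add_div (by omega)]; simp [Nat.div_eq_of_lt h]

lemma mexp (s a b : ℕ) (h : b ≤ a) : s*(a-b) + s*b = s*a := by
  rw [← Nat.mul_add, Nat.sub_add_cancel h]

lemma Nv_eq {s q : ℕ} (hq : q = 2*s^2) (a b c d : ℕ) :
    Nv s q (a,b,c,d) = s * (2*s*(a+b+c) + (b+2*c) + d*(2*s+2)) + d := by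
  subst hq; simp only [Nv]; ring

lemma comps {s q : ℕ} (hs : 2 ≤ s) (hq : q = 2*s^2) {b c d : ℕ} (a : ℕ)
    (hb : b < 2) (hc : c < s) (hd : d < s) :
    (Nv s q (a,b,c,d)) % s = d ∧ (Nv s q (a,b,c,d)) / s = 2*s*(a+b+c) + (b+2*c) + d*(2*s+2)
    ∧ ee s (Nv s q (a,b,c,d)) = b + 2*c ∧ jj s (Nv s q (a,b,c,d)) = a+b+c := by
  have key := Nv_eq hq a b c d
  have h1 : Nv s q (a,b,c,d) % s = d := by rw [key]; exact dm_mod _ _ hd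
  have h2 : Nv s q (a,b,c,d) / s = 2*s*(a+b+c) + (b+2*c) + d*(2*s+2) := by
    rw [key]; exact dm_div _ _ hd
  have hu : uu s (Nv s q (a,b,c,d)) = 2*s*(a+b+c) + (b+2*c) := by
    unfold uu; rw [h1, h2]; simp
  have he : ee s (Nv s q (a,b,c,d)) = b + 2*c := by
    unfold ee; rw [hu]; exact dm_mod _ _ (by omega)
  have hj : jj s (Nv s q (a,b,c,d)) = a+b+c := by
    unfold jj; rw [hu]; exact dm_div _ _ (by omega)
  exact ⟨h1, h2, he, hj⟩

lemma Nv_inj {s q : ℕ} (hs : 2 ≤ s) (hq : q = 2*s^2) {a b c d a' b' c' d' : ℕ}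
    (hb : b < 2) (hc : c < s) (hd : d < s) (hb' : b' < 2) (hc' : c' < s) (hd' : d' < s)
    (h : Nv s q (a,b,c,d) = Nv s q (a',b',c',d')) : a = a' ∧ b = b' ∧ c = c' ∧ d = d' := by
  obtain ⟨m1, _, e1, j1⟩ := comps hs hq a hb hc hd
  obtain ⟨m2, _, e2, j2⟩ := comps hs hq a' hb' hc' hd'
  rw [h] at m1 e1 j1
  have hdd : d = d' := by rw [← m1, m2]
  have hee : b + 2*c = b' + 2*c' := by rw [← e1, e2]
  have hjj : a + b + c = a' + b' + c' := by rw [← j1, j2]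
  omega

lemma rep_iff {s q : ℕ} (hs : 2 ≤ s) (hq : q = 2*s^2) (n : ℕ) :
    (∃ a b c d, a < q ∧ b < 2 ∧ c < s ∧ d < s ∧ Nv s q (a,b,c,d) = n) ↔ Rp s q n := by
  have hq8 : 8 ≤ q := by subst hq; nlinarith
  constructor
  · rintro ⟨a,b,c,d,ha,hb,hc,hd,hN⟩
    obtain ⟨m1, h2, e1, j1⟩ := comps hs hq a hb hc hd
    rw [hN] at m1 h2 e1 j1
    refine ⟨?_, ?_, ?_⟩
    · rw [m1, h2]; exact Nat.le_add_left _ _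
    · rw [e1, j1]; omega
    · rw [e1, j1]; omega
  · rintro ⟨h1, h2, h3⟩
    set d := n % s with hdn
    set k := n / s with hkn
    have hd : d < s := Nat.mod_lt _ (by omega)
    have hdk : s * k + d = n := Nat.div_add_mod n s
    set D := d * (2*s+2) with hD
    have hu : uu s n = k - D := rfl
    set u := uu s n with hun
    have hue : 2*s*(jj s n) + ee s n = u := Nat.div_add_mod u (2*s)
    set e := ee s n with hen
    set j := jj s n with hjn
    have he2 : e < 2*s := Nat.mod_lt _ (by omega)
    set b := e % 2 with hbe
    set c := e / 2 with hce
    have hku : u + D = k := by omega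
    refine ⟨j - (b+c), b, c, d, by omega, by omega, by omega, hd, ?_⟩
    have hj : (j - (b+c)) + b + c = j := by omega
    rw [Nv_eq hq, hj]
    have hbc : b + 2*c = e := by omega
    rw [hbc]
    have hk : 2*s*j + e + D = k := by rw [hue]; exact hku
    rw [hk]
    exact hdk


lemma Rp_char {s q n k d u e j : ℕ} (hs : 2 ≤ s) (hdk : s*k + d = n) (hd : d < s)
    (hu : u + d*(2*s+2) = k) (hje : 2*s*j + e = u) (he : e < 2*s) :
    Rp s q n ↔ (e % 2 + e / 2 ≤ j ∧ j ≤ q - 1 + (e % 2 + e / 2)) := by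
  have hmod : n % s = d := by rw [← hdk]; exact dm_mod _ _ hd
  have hdiv : n / s = k := by rw [← hdk]; exact dm_div _ _ hd
  have huu : uu s n = u := by unfold uu; rw [hmod, hdiv]; omega
  have hee : ee s n = e := by unfold ee; rw [huu, ← hje]; exact dm_mod _ _ he
  have hjj : jj s n = j := by unfold jj; rw [huu, ← hje]; exact dm_div _ _ he
  unfold Rp; rw [hmod, hdiv, hee, hjj]
  constructor
  · rintro ⟨-, h2, h3⟩; exact ⟨h2, h3⟩
  · rintro ⟨h2, h3⟩; exact ⟨by omega, h2, h3⟩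

lemma Rp_char_neg {s q n k d : ℕ} (hdk : s*k + d = n) (hd : d < s)
    (hno : k < d*(2*s+2)) : ¬ Rp s q n := by
  rintro ⟨h1, -, -⟩
  have hmod : n % s = d := by rw [← hdk]; exact dm_mod _ _ hd
  have hdiv : n / s = k := by rw [← hdk]; exact dm_div _ _ hd
  rw [hmod, hdiv] at h1
  omega

lemma Rp_build {s q n k d u : ℕ} (hs : 2 ≤ s) (hq : q = 2*s^2)
    (hdk : s*k + d = n) (hd : d < s) (hu : u + d*(2*s+2) = k)
    (h1 : q ≤ u) (h2 : u < 2*s*q) : Rp s q n := by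
  have hmod : n % s = d := by rw [← hdk]; exact dm_mod _ _ hd
  have hdiv : n / s = k := by rw [← hdk]; exact dm_div _ _ hd
  have huun : uu s n = u := by unfold uu; rw [hmod, hdiv]; omega
  have hje : 2*s*(jj s n) + ee s n = u := by rw [← huun]; exact Nat.div_add_mod _ _
  have heb : ee s n < 2*s := by
    have : uu s n % (2*s) < 2*s := Nat.mod_lt _ (by omega)
    exact this
  have hjs : s ≤ jj s n := by
    by_contra hcon; push_neg at hcon
    have hmm := Nat.mul_le_mul (le_refl (2*s)) (show jj s n ≤ s-1 by omega)
    have he1 : 2*s*(s-1) + 2*s*1 = 2*s*s := by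
      rw [← Nat.mul_add, Nat.sub_add_cancel (by omega)]
    have he3 : 2*s*s = q := by subst hq; ring
    omega
  have hjq : jj s n < q := by
    by_contra hcon; push_neg at hcon
    have hmm := Nat.mul_le_mul (le_refl (2*s)) hcon
    omega
  exact (Rp_char hs hdk hd hu hje heb).mpr ⟨by omega, by omega⟩

lemma Rp_of_big {s q g : ℕ} (hs : 2 ≤ s) (hq : q = 2*s^2) (hg : g = s*(q-1))
    {n : ℕ} (h1 : 2*g ≤ n) (h2 : n < q^2) : Rp s q n := by
  have hq8 : 8 ≤ q := by subst hq; nlinarith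
  have h2s : 2*s + 2 ≤ q := by subst hq; nlinarith
  have hgq : g + s = s*q := by
    subst hg
    calc s*(q-1) + s = s*((q-1) + 1) := by ring
      _ = s*q := by rw [Nat.sub_add_cancel (by omega)]
  have hq2 : q^2 = q*q := by ring
  have hd : n % s < s := Nat.mod_lt _ (by omega)
  have hdk : s * (n/s) + n % s = n := Nat.div_add_mod n s
  set d := n % s with hdd
  set k := n / s with hkk2
  clear_value d k
  have hk1 : 2*q ≤ k + 2 := by
    by_contra hcon
    push_neg at hcon
    have hmm := Nat.mul_le_mul (le_refl s) (show k ≤ 2*q - 3 by omega)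
    have he1 : s*(2*q-3) + s*3 = s*(2*q) := mexp s (2*q) 3 (by omega)
    have he2 : s*(2*q) = 2*(s*q) := by ring
    omega
  have hDq : d*(2*s+2) + 2 ≤ q := by
    have hmm := Nat.mul_le_mul (show d ≤ s-1 by omega) (le_refl (2*s+2))
    have he1 : (s-1)*(2*s+2) + 1*(2*s+2) = s*(2*s+2) := by
      rw [← Nat.add_mul, Nat.sub_add_cancel (by omega)]
    have he2 : s*(2*s+2) = q + 2*s := by subst hq; ring
    omega
  have hc1 : d*(2*s+2) ≤ k := by omega
  have hu : (k - d*(2*s+2)) + d*(2*s+2) = k := Nat.sub_add_cancel hc1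
  have hk2 : k < 2*s*q := by
    have hkq : s*k < s*(2*s*q) := by
      calc s*k ≤ n := by omega
        _ < q^2 := h2
        _ = s*(2*s*q) := by subst hq; ring
    exact Nat.lt_of_mul_lt_mul_left hkq
  exact Rp_build hs hq hdk hd hu (by omega) (by omega)

lemma Rp_flip {s q g : ℕ} (hs : 2 ≤ s) (hq : q = 2*s^2) (hg : g = s*(q-1))
    {n : ℕ} (hn : n < 2*g) : (Rp s q n ↔ ¬ Rp s q (2*g - 1 - n)) := by
  have hq8 : 8 ≤ q := by subst hq; nlinarith
  have h2s : 2*s + 2 ≤ q := by subst hq; nlinarith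
  have h2sq : 2*q ≤ 2*s*q := by subst hq; nlinarith
  have hgq : g + s = s*q := by
    subst hg
    calc s*(q-1) + s = s*((q-1) + 1) := by ring
      _ = s*q := by rw [Nat.sub_add_cancel (by omega)]
  set m := 2*g - 1 - n with hm2
  have hmn : m + n + 1 = 2*g := by omega
  clear_value m
  have hd : n % s < s := Nat.mod_lt _ (by omega)
  have hdk : s*(n/s) + n % s = n := Nat.div_add_mod n s
  set d := n % s with hd2
  set k := n / s with hk2
  have hmodn : n % s = d := rfl
  have hdivn : n / s = k := rfl
  clear_value d k
  have hk3 : k + 3 ≤ 2*q := by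
    by_contra hcon; push_neg at hcon
    have hmm := Nat.mul_le_mul (le_refl s) (show 2*q-2 ≤ k by omega)
    have he1 : s*(2*q-2) + s*2 = s*(2*q) := mexp s (2*q) 2 (by omega)
    have he2 : s*(2*q) = 2*(s*q) := by ring
    omega
  obtain ⟨d', hdsum⟩ : ∃ x, x + d + 1 = s := ⟨s - d - 1, by omega⟩
  obtain ⟨k', hksum⟩ : ∃ x, x + k + 3 = 2*q := ⟨2*q - k - 3, by omega⟩
  have hmdk : s*k' + d' = m := by
    have he1 : s*k' + s*k + s*3 = s*(2*q) := by
      calc s*k' + s*k + s*3 = s*(k' + k + 3) := by ring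
        _ = s*(2*q) := by rw [hksum]
    have he2 : s*(2*q) = 2*(s*q) := by ring
    omega
  have hd' : d' < s := by omega
  have hDD : d*(2*s+2) + d'*(2*s+2) + (2*s+2) = q + 2*s := by
    calc d*(2*s+2) + d'*(2*s+2) + (2*s+2) = (d + d' + 1)*(2*s+2) := by ring
      _ = s*(2*s+2) := by rw [show d + d' + 1 = s by omega]
      _ = q + 2*s := by subst hq; ring
  by_cases hc1 : d*(2*s+2) ≤ k
  · have hu : (k - d*(2*s+2)) + d*(2*s+2) = k := Nat.sub_add_cancel hc1
    set u := k - d*(2*s+2) with hu2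
    clear_value u
    by_cases hbig : q ≤ u
    · -- Rp n true, Rp m false
      have hRn : Rp s q n := Rp_build hs hq hdk hd hu hbig (by omega)
      have hRm : ¬ Rp s q m := Rp_char_neg hmdk hd' (by omega)
      exact iff_of_true hRn hRm
    · push_neg at hbig
      have hDk' : d'*(2*s+2) ≤ k' := by omega
      have hu' : (k' - d'*(2*s+2)) + d'*(2*s+2) = k' := Nat.sub_add_cancel hDk'
      set u' := k' - d'*(2*s+2) with hu'2
      clear_value u'
      have huu' : u' + u + 1 = q := by omega
      have huun : uu s n = u := by unfold uu; rw [hmodn, hdivn, hu2]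
      have hje : 2*s*(jj s n) + ee s n = u := by rw [← huun]; exact Nat.div_add_mod _ _
      have heb : ee s n < 2*s := by
        have : uu s n % (2*s) < 2*s := Nat.mod_lt _ (by omega)
        exact this
      have hjs : jj s n < s := by
        by_contra hcon; push_neg at hcon
        have hmm := Nat.mul_le_mul (le_refl (2*s)) hcon
        have he3 : 2*s*s = q := by subst hq; ring
        omega
      obtain ⟨j', hjsum⟩ : ∃ x, x + jj s n + 1 = s := ⟨s - jj s n - 1, by omega⟩
      obtain ⟨e', hesum⟩ : ∃ x, x + ee s n + 1 = 2*s := ⟨2*s - ee s n - 1, by omega⟩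
      have hje' : 2*s*j' + e' = u' := by
        have he1 : 2*s*j' + 2*s*(jj s n) + 2*s*1 = 2*s*s := by
          calc 2*s*j' + 2*s*(jj s n) + 2*s*1 = 2*s*(j' + jj s n + 1) := by ring
            _ = 2*s*s := by rw [hjsum]
        have he3 : 2*s*s = q := by subst hq; ring
        omega
      have hcharN := Rp_char (q := q) hs hdk hd (show u + d*(2*s+2) = k by omega) hje heb
      have hcharM := Rp_char (q := q) hs hmdk hd' (show u' + d'*(2*s+2) = k' by omega) hje' (by omega)
      rw [hcharN, hcharM]
      omega
  · push_neg at hc1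
    have hRn : ¬ Rp s q n := Rp_char_neg hdk hd (by omega)
    have hDk' : d'*(2*s+2) + q ≤ k' := by omega
    have hu' : (k' - d'*(2*s+2)) + d'*(2*s+2) = k' := Nat.sub_add_cancel (by omega)
    have hRm : Rp s q m := Rp_build hs hq hmdk hd' hu' (by omega) (by omega)
    exact iff_of_false hRn (not_not_intro hRm)

open Finset

-- g ≥ 1 and 2g ≤ q² facts
lemma g_pos {s q g : ℕ} (hs : 2 ≤ s) (hq : q = 2*s^2) (hg : g = s*(q-1)) : 1 ≤ g := by
  have hq8 : 8 ≤ q := by subst hq; nlinarith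
  rw [hg]
  exact Nat.one_le_iff_ne_zero.mpr (Nat.mul_ne_zero (by omega) (by omega))

lemma two_g_le {s q g : ℕ} (hs : 2 ≤ s) (hq : q = 2*s^2) (hg : g = s*(q-1)) :
    2*g ≤ q^2 := by
  have h1 : g ≤ s*q := by rw [hg]; exact Nat.mul_le_mul (le_refl s) (by omega)
  have h2 : 2*(s*q) ≤ q^2 := by subst hq; nlinarith
  omega

-- cardinality of Rp inside [0, 2g)
lemma Tcard {s q g : ℕ} (hs : 2 ≤ s) (hq : q = 2*s^2) (hg : g = s*(q-1)) :
    ((range (2*g)).filter (Rp s q)).card * 2 = 2*g := by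
  have hg1 : 1 ≤ g := g_pos hs hq hg
  have h1 := Finset.card_filter_add_card_filter_not (s := range (2*g)) (p := Rp s q)
  rw [Finset.card_range] at h1
  have h2 : ((range (2*g)).filter (Rp s q)).card
      = ((range (2*g)).filter (fun n => ¬ Rp s q n)).card := by
    apply Finset.card_nbij' (i := fun n => 2*g-1-n) (j := fun n => 2*g-1-n)
    · intro n hn
      simp only [Finset.mem_coe, Finset.mem_filter, Finset.mem_range] at hn ⊢
      exact ⟨by omega, by
        have := (Rp_flip hs hq hg (n := n) (by omega)).mp hn.2
        exact this⟩
    · intro n hn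
      simp only [Finset.mem_coe, Finset.mem_filter, Finset.mem_range] at hn ⊢
      refine ⟨by omega, ?_⟩
      by_contra hcm
      exact hn.2 ((Rp_flip hs hq hg (n := n) (by omega)).mpr hcm)
    · intro n hn
      simp only [Finset.mem_coe, Finset.mem_filter, Finset.mem_range] at hn
      dsimp only; omega
    · intro n hn
      simp only [Finset.mem_coe, Finset.mem_filter, Finset.mem_range] at hn
      dsimp only; omega
  omega

-- transfer lemma : counting tuples = counting values
lemma transfer {s q : ℕ} (hs : 2 ≤ s) (hq : q = 2*s^2) (p : ℕ → Prop) [DecidablePred p]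
    (X : ℕ) (hpX : ∀ n, p n → n < X) :
    (((range q ×ˢ (range 2 ×ˢ (range s ×ˢ range s))).filter
      (fun t => p (Nv s q t))).card : ℕ)
    = ((range X).filter (fun n => Rp s q n ∧ p n)).card := by
  apply Finset.card_bij (i := fun t _ => Nv s q t)
  · rintro ⟨a,b,c,d⟩ ht
    simp only [Finset.mem_filter, Finset.mem_product, Finset.mem_range] at ht ⊢
    obtain ⟨⟨h1,h2,h3,h4⟩, hp⟩ := ht
    exact ⟨hpX _ hp, (rep_iff hs hq _).mp ⟨a,b,c,d, h1,h2,h3,h4, rfl⟩, hp⟩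
  · rintro ⟨a,b,c,d⟩ h1 ⟨a',b',c',d'⟩ h2 heq
    simp only [Finset.mem_filter, Finset.mem_product, Finset.mem_range] at h1 h2
    obtain ⟨e1,e2,e3,e4⟩ := Nv_inj hs hq h1.1.2.1 h1.1.2.2.1 h1.1.2.2.2 h2.1.2.1 h2.1.2.2.1 h2.1.2.2.2 heq
    simp [e1,e2,e3,e4]
  · intro n hn
    simp only [Finset.mem_filter, Finset.mem_range] at hn
    obtain ⟨hX, hR, hp⟩ := hn
    obtain ⟨a,b,c,d,h1,h2,h3,h4,hN⟩ := (rep_iff hs hq n).mpr hR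
    refine ⟨(a,b,c,d), ?_, hN⟩
    simp only [Finset.mem_filter, Finset.mem_product, Finset.mem_range]
    exact ⟨⟨h1,h2,h3,h4⟩, by rw [hN]; exact hp⟩

-- the key counting identity
lemma count_key {s q g ℓ : ℕ} (hs : 2 ≤ s) (hq : q = 2*s^2) (hg : g = s*(q-1))
    (hl1 : 1 ≤ ℓ) (hl2 : ℓ < q^2) :
    ((range (q^2)).filter (fun n => Rp s q n ∧ n ≤ ℓ)).card + g
    = ((range (2*g)).filter (fun n => Rp s q n ∧ n + ℓ + 2 ≤ 2*g)).card + ℓ + 1 := by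
  have hg1 : 1 ≤ g := g_pos hs hq hg
  have hS1 : (range (q^2)).filter (fun n => Rp s q n ∧ n ≤ ℓ)
      = (range (ℓ+1)).filter (Rp s q) := by
    ext n
    simp only [Finset.mem_filter, Finset.mem_range]
    constructor
    · rintro ⟨h1,h2,h3⟩; exact ⟨by omega, h2⟩
    · rintro ⟨h1,h2⟩; exact ⟨by omega, h2, by omega⟩
  rw [hS1]
  have hT := Tcard hs hq hg
  by_cases hcase : ℓ + 2 ≤ 2*g
  · -- small ℓ
    have hS13 := Finset.card_filter_add_card_filter_not (s := range (ℓ+1)) (p := Rp s q)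
    rw [Finset.card_range] at hS13
    have hbij : ((range (ℓ+1)).filter (fun n => ¬ Rp s q n)).card
        = ((range (2*g)).filter (fun n => Rp s q n ∧ ¬(n + ℓ + 2 ≤ 2*g))).card := by
      apply Finset.card_nbij' (i := fun n => 2*g-1-n) (j := fun n => 2*g-1-n)
      · intro n hn
        simp only [Finset.mem_coe, Finset.mem_filter, Finset.mem_range] at hn ⊢
        refine ⟨by omega, ?_, by omega⟩
        by_contra hcm
        exact hn.2 ((Rp_flip hs hq hg (n := n) (by omega)).mpr hcm)
      · intro n hn
        simp only [Finset.mem_coe, Finset.mem_filter, Finset.mem_range] at hn ⊢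
        refine ⟨by omega, ?_⟩
        intro hRn
        have hf := (Rp_flip hs hq hg (n := 2*g-1-n) (by omega)).mp hRn
        rw [show 2*g-1-(2*g-1-n) = n from by omega] at hf
        exact hf hn.2.1
      · intro n hn
        simp only [Finset.mem_coe, Finset.mem_filter, Finset.mem_range] at hn
        dsimp only; omega
      · intro n hn
        simp only [Finset.mem_coe, Finset.mem_filter, Finset.mem_range] at hn
        dsimp only; omega
    have e1 : (range (2*g)).filter (fun n => Rp s q n ∧ n + ℓ + 2 ≤ 2*g)
        = ((range (2*g)).filter (Rp s q)).filter (fun n => n + ℓ + 2 ≤ 2*g) := by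
      rw [Finset.filter_filter]
    have e2 : (range (2*g)).filter (fun n => Rp s q n ∧ ¬(n + ℓ + 2 ≤ 2*g))
        = ((range (2*g)).filter (Rp s q)).filter (fun n => ¬(n + ℓ + 2 ≤ 2*g)) := by
      rw [Finset.filter_filter]
    have hS2 := Finset.card_filter_add_card_filter_not
      (s := (range (2*g)).filter (Rp s q)) (p := fun n => n + ℓ + 2 ≤ 2*g)
    rw [← e1, ← e2] at hS2
    omega
  · -- large ℓ : 2g ≤ ℓ+1
    have hb0 : (range (2*g)).filter (fun n => Rp s q n ∧ n + ℓ + 2 ≤ 2*g) = ∅ := by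
      apply Finset.filter_false_of_mem
      intro n hn
      simp only [Finset.mem_range] at hn
      rintro ⟨-, h⟩
      omega
    rw [hb0]
    have hu : range (ℓ+1) = range (2*g) ∪ Finset.Ico (2*g) (ℓ+1) := by
      rw [Finset.range_eq_Ico, Finset.range_eq_Ico, Finset.Ico_union_Ico_eq_Ico (by omega) (by omega)]
    rw [hu, Finset.filter_union, Finset.card_union_of_disjoint]
    · have hfull : (Finset.Ico (2*g) (ℓ+1)).filter (Rp s q) = Finset.Ico (2*g) (ℓ+1) := by
        apply Finset.filter_true_of_mem
        intro n hn
        simp only [Finset.mem_Ico] at hn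
        exact Rp_of_big hs hq hg (by omega) (by omega)
      rw [hfull, Nat.card_Ico]
      simp only [Finset.card_empty]
      omega
    · apply Finset.disjoint_filter_filter
      rw [Finset.range_eq_Ico]
      exact Finset.Ico_disjoint_Ico_consecutive 0 (2*g) (ℓ+1)

lemma Nv_max {s q g : ℕ} (hs : 2 ≤ s) (hq : q = 2*s^2) (hg : g = s*(q-1))
    {a b c d : ℕ} (h1 : a < q) (h2 : b < 2) (h3 : c < s) (h4 : d < s) :
    Nv s q (a,b,c,d) + 1 ≤ q^2 + 2*g := by
  have hq8 : 8 ≤ q := by subst hq; nlinarith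
  rw [Nv_eq hq]
  have m1 : 2*s*(a+b+c) ≤ 2*s*(q+s-1) := Nat.mul_le_mul (le_refl _) (by omega)
  have m2 : d*(2*s+2) ≤ (s-1)*(2*s+2) := Nat.mul_le_mul (by omega) (le_refl _)
  have m3 : 2*s*(a+b+c) + (b+2*c) + d*(2*s+2)
      ≤ 2*s*(q+s-1) + (2*s-1) + (s-1)*(2*s+2) := by omega
  have m4 : s*(2*s*(a+b+c) + (b+2*c) + d*(2*s+2))
      ≤ s*(2*s*(q+s-1) + (2*s-1) + (s-1)*(2*s+2)) := Nat.mul_le_mul (le_refl s) m3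
  have hexp : s*(2*s*(q+s-1) + (2*s-1) + (s-1)*(2*s+2)) + s = q^2 + 2*g := by
    subst hg; subst hq
    have c1 : (1:ℕ) ≤ 2*s^2 + s := by nlinarith
    have c2 : (1:ℕ) ≤ 2*s := by omega
    have c3 : (1:ℕ) ≤ s := by omega
    have c4 : (1:ℕ) ≤ 2*s^2 := by nlinarith
    zify [c1, c2, c3, c4]
    ring
  omega

lemma Nv_sum {s q g : ℕ} (hs : 2 ≤ s) (hq : q = 2*s^2) (hg : g = s*(q-1))
    {a b c d : ℕ} (h1 : a < q) (h2 : b < 2) (h3 : c < s) (h4 : d < s) :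
    Nv s q (a,b,c,d) + Nv s q (q-1-a, 1-b, s-1-c, s-1-d) + 1 = q^2 + 2*g := by
  have hq8 : 8 ≤ q := by subst hq; nlinarith
  simp only [Nv]
  subst hg; subst hq
  have c0 : a ≤ 2*s^2 - 1 := by omega
  have c1 : (1:ℕ) ≤ 2*s^2 := by nlinarith
  have c2 : b ≤ 1 := by omega
  have c3 : c ≤ s - 1 := by omega
  have c4 : d ≤ s - 1 := by omega
  have c5 : (1:ℕ) ≤ s := by omega
  zify [c0, c1, c2, c3, c4, c5]
  ring

lemma cnt_all {q ℓ n : ℕ} (h : n ≤ ℓ) :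
    ((range (ℓ+1)).filter (fun r => n ≤ r*q^2+ℓ)).card = ℓ+1 := by
  rw [Finset.filter_true_of_mem, Finset.card_range]
  intro r hr
  omega

lemma cnt_mid {q ℓ n : ℕ} (h1 : ℓ < n) (h2 : n ≤ q^2+ℓ) :
    ((range (ℓ+1)).filter (fun r => n ≤ r*q^2+ℓ)).card = ℓ := by
  have he : (range (ℓ+1)).filter (fun r => n ≤ r*q^2+ℓ) = Finset.Ico 1 (ℓ+1) := by
    ext r
    simp only [Finset.mem_filter, Finset.mem_range, Finset.mem_Ico]
    constructor
    · rintro ⟨hr, hn⟩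
      refine ⟨?_, hr⟩
      by_contra hcon
      push_neg at hcon
      have hmul : r*q^2 ≤ 0*(q^2) := Nat.mul_le_mul (by omega) (le_refl _)
      have h0 : 0*(q^2) = 0 := Nat.zero_mul _
      omega
    · rintro ⟨h1r, hr⟩
      have hmul : 1*(q^2) ≤ r*q^2 := Nat.mul_le_mul h1r (le_refl _)
      have h0 : 1*(q^2) = q^2 := Nat.one_mul _
      exact ⟨hr, by omega⟩
  rw [he, Nat.card_Ico]
  omega

lemma cnt_hi {q ℓ n : ℕ} (hl : 1 ≤ ℓ) (h1 : q^2+ℓ < n) (h2 : n ≤ 2*q^2+ℓ) :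
    ((range (ℓ+1)).filter (fun r => n ≤ r*q^2+ℓ)).card + 2 = ℓ + 1 := by
  have he : (range (ℓ+1)).filter (fun r => n ≤ r*q^2+ℓ) = Finset.Ico 2 (ℓ+1) := by
    ext r
    simp only [Finset.mem_filter, Finset.mem_range, Finset.mem_Ico]
    constructor
    · rintro ⟨hr, hn⟩
      refine ⟨?_, hr⟩
      by_contra hcon
      push_neg at hcon
      have hmul : r*q^2 ≤ 1*(q^2) := Nat.mul_le_mul (by omega) (le_refl _)
      have h0 : 1*(q^2) = q^2 := Nat.one_mul _
      omega
    · rintro ⟨h2r, hr⟩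
      have hmul : 2*(q^2) ≤ r*q^2 := Nat.mul_le_mul h2r (le_refl _)
      exact ⟨hr, by omega⟩
  rw [he, Nat.card_Ico, show ℓ + 1 - 2 = ℓ - 1 from by omega]
  omega

lemma Bflip {s q g ℓ : ℕ} (hs : 2 ≤ s) (hq : q = 2*s^2) (hg : g = s*(q-1)) :
    ((range q ×ˢ (range 2 ×ˢ (range s ×ˢ range s))).filter
      (fun t => q^2 + ℓ < Nv s q t)).card
    = ((range q ×ˢ (range 2 ×ˢ (range s ×ˢ range s))).filter
      (fun t => Nv s q t + ℓ + 2 ≤ 2*g)).card := by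
  apply Finset.card_nbij'
    (i := fun t => (q-1-t.1, 1-t.2.1, s-1-t.2.2.1, s-1-t.2.2.2))
    (j := fun t => (q-1-t.1, 1-t.2.1, s-1-t.2.2.1, s-1-t.2.2.2))
  · intro t ht; obtain ⟨a,b,c,d⟩ := t
    simp only [Finset.mem_coe, Finset.mem_filter, Finset.mem_product, Finset.mem_range] at ht ⊢
    obtain ⟨⟨h1,h2,h3,h4⟩, hlt⟩ := ht
    have hsum := Nv_sum hs hq hg h1 h2 h3 h4
    exact ⟨⟨by omega, by omega, by omega, by omega⟩, by omega⟩
  · intro t ht; obtain ⟨a,b,c,d⟩ := t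
    simp only [Finset.mem_coe, Finset.mem_filter, Finset.mem_product, Finset.mem_range] at ht ⊢
    obtain ⟨⟨h1,h2,h3,h4⟩, hlt⟩ := ht
    have hsum := Nv_sum hs hq hg h1 h2 h3 h4
    exact ⟨⟨by omega, by omega, by omega, by omega⟩, by omega⟩
  · intro t ht; obtain ⟨a,b,c,d⟩ := t
    simp only [Finset.mem_coe, Finset.mem_filter, Finset.mem_product, Finset.mem_range] at ht
    obtain ⟨⟨h1,h2,h3,h4⟩, -⟩ := ht
    simp only [Prod.mk.injEq]
    exact ⟨by omega, by omega, by omega, by omega⟩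
  · intro t ht; obtain ⟨a,b,c,d⟩ := t
    simp only [Finset.mem_coe, Finset.mem_filter, Finset.mem_product, Finset.mem_range] at ht
    obtain ⟨⟨h1,h2,h3,h4⟩, -⟩ := ht
    simp only [Prod.mk.injEq]
    exact ⟨by omega, by omega, by omega, by omega⟩

end Suz

open Finset

theorem suzuki_riemann_roch_dimension
    (m q₀ q g : ℕ) (hm : 1 ≤ m) (hq₀ : q₀ = 2 ^ m) (hq : q = 2 * q₀ ^ 2)
    (hg : g = q₀ * (q - 1))
    (ℓ : ℕ) (hℓ1 : 1 ≤ ℓ) (hℓ2 : ℓ ≤ q ^ 2 - 1) :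
    Set.ncard {t : ℕ × ℕ × ℕ × ℕ × ℕ |
        t.1 ≤ q - 1 ∧ t.2.1 ≤ 1 ∧ t.2.2.1 ≤ q₀ - 1 ∧ t.2.2.2.1 ≤ q₀ - 1 ∧ t.2.2.2.2 ≤ ℓ ∧
        t.1 * q + t.2.1 * (q + q₀) + t.2.2.1 * (q + 2 * q₀) + t.2.2.2.1 * (q + 2 * q₀ + 1)
          ≤ t.2.2.2.2 * q ^ 2 + ℓ}
      = ℓ * (q ^ 2 + 1) - g + 1 := by
  have hs : 2 ≤ q₀ := by
    subst hq₀
    calc (2:ℕ) = 2^1 := (pow_one 2).symm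
      _ ≤ 2^m := Nat.pow_le_pow_right (by norm_num) hm
  have hq' : q = 2*q₀^2 := by rw [hq]
  have hg' : g = q₀*(q-1) := hg
  have hq8 : 8 ≤ q := by subst hq'; nlinarith
  have hq2 : 8 ≤ q^2 := by nlinarith
  have hl2 : ℓ < q^2 := by omega
  have hg1 : 1 ≤ g := Suz.g_pos hs hq' hg'
  have h2g : 2*g ≤ q^2 := Suz.two_g_le hs hq' hg'
  have hset : {t : ℕ × ℕ × ℕ × ℕ × ℕ |
        t.1 ≤ q - 1 ∧ t.2.1 ≤ 1 ∧ t.2.2.1 ≤ q₀ - 1 ∧ t.2.2.2.1 ≤ q₀ - 1 ∧ t.2.2.2.2 ≤ ℓ ∧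
        t.1 * q + t.2.1 * (q + q₀) + t.2.2.1 * (q + 2 * q₀) + t.2.2.2.1 * (q + 2 * q₀ + 1)
          ≤ t.2.2.2.2 * q ^ 2 + ℓ}
      = ↑((range q ×ˢ (range 2 ×ˢ (range q₀ ×ˢ (range q₀ ×ˢ range (ℓ+1))))).filter
        (fun t : ℕ×ℕ×ℕ×ℕ×ℕ =>
          Suz.Nv q₀ q (t.1, t.2.1, t.2.2.1, t.2.2.2.1) ≤ t.2.2.2.2*q^2 + ℓ)) := by
    ext t
    rw [Finset.mem_coe, Finset.mem_filter]
    simp only [Set.mem_setOf_eq, Finset.coe_filter, Finset.mem_filter, Finset.mem_product, Finset.mem_range,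
      Suz.Nv]
    constructor
    · rintro ⟨h1,h2,h3,h4,h5,h6⟩
      exact ⟨⟨by omega, by omega, by omega, by omega, by omega⟩, h6⟩
    · rintro ⟨⟨h1,h2,h3,h4,h5⟩, h6⟩
      exact ⟨by omega, by omega, by omega, by omega, by omega, h6⟩
  rw [hset, Set.ncard_coe_finset]
  have hFsum : ((range q ×ˢ (range 2 ×ˢ (range q₀ ×ˢ (range q₀ ×ˢ range (ℓ+1))))).filter
        (fun t : ℕ×ℕ×ℕ×ℕ×ℕ =>
          Suz.Nv q₀ q (t.1, t.2.1, t.2.2.1, t.2.2.2.1) ≤ t.2.2.2.2*q^2 + ℓ)).card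
      = ∑ t ∈ range q ×ˢ (range 2 ×ˢ (range q₀ ×ˢ range q₀)),
          ((range (ℓ+1)).filter (fun r => Suz.Nv q₀ q t ≤ r*q^2+ℓ)).card := by
    rw [Finset.card_filter]
    simp only [Finset.sum_product, Finset.card_filter]
  rw [hFsum]
  set B4 := range q ×ˢ (range 2 ×ˢ (range q₀ ×ˢ range q₀)) with hB4
  have hkey : ∀ t ∈ B4, ((range (ℓ+1)).filter (fun r => Suz.Nv q₀ q t ≤ r*q^2+ℓ)).card
      + ((if ℓ < Suz.Nv q₀ q t then 1 else 0) + (if q^2 + ℓ < Suz.Nv q₀ q t then 1 else 0))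
      = ℓ + 1 := by
    rintro ⟨a,b,c,d⟩ ht
    rw [hB4] at ht
    simp only [Finset.mem_product, Finset.mem_range] at ht
    obtain ⟨h1,h2,h3,h4⟩ := ht
    have hmax := Suz.Nv_max hs hq' hg' h1 h2 h3 h4
    split_ifs with hA hB hB
    · have := Suz.cnt_hi (q := q) (ℓ := ℓ) (n := Suz.Nv q₀ q (a,b,c,d)) hℓ1 hB (by omega)
      omega
    · have := Suz.cnt_mid (q := q) (ℓ := ℓ) (n := Suz.Nv q₀ q (a,b,c,d)) hA (by omega)
      omega
    · omega
    · have := Suz.cnt_all (q := q) (ℓ := ℓ) (n := Suz.Nv q₀ q (a,b,c,d)) (by omega)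
      omega
  have hsum2 : (∑ t ∈ B4, ((range (ℓ+1)).filter (fun r => Suz.Nv q₀ q t ≤ r*q^2+ℓ)).card)
      + (∑ t ∈ B4, ((if ℓ < Suz.Nv q₀ q t then 1 else 0)
          + (if q^2 + ℓ < Suz.Nv q₀ q t then 1 else 0)))
      = B4.card * (ℓ+1) := by
    have h1 : ∑ t ∈ B4, (((range (ℓ+1)).filter (fun r => Suz.Nv q₀ q t ≤ r*q^2+ℓ)).card
        + ((if ℓ < Suz.Nv q₀ q t then 1 else 0) + (if q^2 + ℓ < Suz.Nv q₀ q t then 1 else 0)))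
        = ∑ _t ∈ B4, (ℓ+1) := Finset.sum_congr rfl hkey
    rw [Finset.sum_add_distrib, Finset.sum_const, smul_eq_mul] at h1
    exact h1
  have hB4card : B4.card = q^2 := by
    rw [hB4]
    simp only [Finset.card_product, Finset.card_range]
    subst hq'; ring
  have hW : ∑ t ∈ B4, ((if ℓ < Suz.Nv q₀ q t then 1 else 0)
        + (if q^2 + ℓ < Suz.Nv q₀ q t then 1 else 0))
      = (B4.filter (fun t => ℓ < Suz.Nv q₀ q t)).card
        + (B4.filter (fun t => q^2 + ℓ < Suz.Nv q₀ q t)).card := by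
    rw [Finset.sum_add_distrib, Finset.card_filter, Finset.card_filter]
  have hsplit := Finset.card_filter_add_card_filter_not (s := B4)
    (p := fun t => Suz.Nv q₀ q t ≤ ℓ)
  have hc : B4.filter (fun t => ¬ Suz.Nv q₀ q t ≤ ℓ)
      = B4.filter (fun t => ℓ < Suz.Nv q₀ q t) := by
    simp only [not_le]
  rw [hc, hB4card] at hsplit
  have hCtrans : (B4.filter (fun t => Suz.Nv q₀ q t ≤ ℓ)).card
      = ((range (q^2)).filter (fun n => Suz.Rp q₀ q n ∧ n ≤ ℓ)).card := by
    rw [hB4]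
    exact Suz.transfer hs hq' (p := fun n => n ≤ ℓ) (q^2) (fun n hn => by omega)
  have hBtrans : (B4.filter (fun t => q^2 + ℓ < Suz.Nv q₀ q t)).card
      = (B4.filter (fun t => Suz.Nv q₀ q t + ℓ + 2 ≤ 2*g)).card := by
    rw [hB4]
    exact Suz.Bflip hs hq' hg'
  have hBtrans2 : (B4.filter (fun t => Suz.Nv q₀ q t + ℓ + 2 ≤ 2*g)).card
      = ((range (2*g)).filter (fun n => Suz.Rp q₀ q n ∧ n + ℓ + 2 ≤ 2*g)).card := by
    rw [hB4]
    exact Suz.transfer hs hq' (p := fun n => n + ℓ + 2 ≤ 2*g) (2*g) (fun n hn => by omega)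
  have hkeyc := Suz.count_key hs hq' hg' hℓ1 hl2
  have hfin1 : q^2 * (ℓ+1) = ℓ*q^2 + q^2 := by ring
  have hfin2 : ℓ*(q^2+1) = ℓ*q^2 + ℓ := by ring
  have hfin3 : 1*(q^2) ≤ ℓ*q^2 := Nat.mul_le_mul hℓ1 (le_refl _)
  have hfin4 : 1*(q^2) = q^2 := Nat.one_mul _
  rw [hB4card] at hsum2
  omega
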